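/- Let 0 < m < M, let K, k be real numbers with K > k, K/M < k/m, and (K/M)·q ≤ (K-k)/(M-m) ≤ (k/m)·q for some q with 0 < q < 1. Then for all t ∈ [m, M], h(t) = t^{-q}(k + ((K-k)/(M-m))(t-m)) ≤ max{k/m^q, K/M^q}. -/

import Mathlib

theorem furuta_lemma_endpoint_max (m M K k q : ℝ) (hm : 0 < m) (hmM : m < M)
    (hKk : K > k) (hKM : K / M < k / m) (hq0 : 0 < q) (hq1 : q < 1)
    (h1 : (K / M) * q ≤ (K - k) / (M - m)) (h2 : (K - k) / (M - m) ≤ (k / m) * q)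
    (t : ℝ) (ht : t ∈ Set.Icc m M) :
    t ^ (-q) * (k + (K - k) / (M - m) * (t - m)) ≤ max (k / m ^ q) (K / M ^ q) := by
  obtain ⟨htm, htM⟩ := ht
  have hM : 0 < M := hm.trans hmM
  have ht0 : 0 < t := lt_of_lt_of_le hm htm
  have hMm : 0 < M - m := by linarith
  have hb0 : 0 < (K - k) / (M - m) := div_pos (by linarith) hMm
  have hkm : 0 < k / m * q := hb0.trans_le h2
  have hk0 : 0 < k := by
    have hkm' : 0 < k / m := by
      rcases mul_pos_iff.mp hkm with ⟨h, _⟩ | ⟨_, h⟩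
      · exact h
      · linarith
    rcases div_pos_iff.mp hkm' with ⟨h, _⟩ | ⟨_, h⟩
    · exact h
    · linarith
  set C := max (k / m ^ q) (K / M ^ q) with hC
  have hmq : (0:ℝ) < m ^ q := Real.rpow_pos_of_pos hm q
  have hMq : (0:ℝ) < M ^ q := Real.rpow_pos_of_pos hM q
  have htq : (0:ℝ) < t ^ q := Real.rpow_pos_of_pos ht0 q
  have hCk : k ≤ C * m ^ q := by
    have := le_max_left (k / m ^ q) (K / M ^ q)
    calc k = k / m ^ q * m ^ q := by field_simp
    _ ≤ C * m ^ q := by exact mul_le_mul_of_nonneg_right this hmq.le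
  have hCK : K ≤ C * M ^ q := by
    have := le_max_right (k / m ^ q) (K / M ^ q)
    calc K = K / M ^ q * M ^ q := by field_simp
    _ ≤ C * M ^ q := by exact mul_le_mul_of_nonneg_right this hMq.le
  have hC0 : 0 < C := lt_of_lt_of_le (div_pos hk0 hmq) (le_max_left _ _)
  -- write t as convex combination
  set s := (t - m) / (M - m) with hs
  have hs0 : 0 ≤ s := div_nonneg (by linarith) hMm.le
  have hs1 : s ≤ 1 := by rw [hs, div_le_one hMm]; linarith
  have hts : t = (1 - s) * m + s * M := by have h := div_mul_cancel₀ (t - m) hMm.ne'; linear_combination (-1 : ℝ) * h - (M - m) * hs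
  have hconc := (Real.concaveOn_rpow hq0.le hq1.le).2
      (Set.mem_Ici.mpr hm.le) (Set.mem_Ici.mpr hM.le)
      (by linarith : (0:ℝ) ≤ 1 - s) hs0 (by ring)
  simp only [smul_eq_mul] at hconc
  rw [← hts] at hconc
  -- line value
  have hline : k + (K - k) / (M - m) * (t - m) = (1 - s) * k + s * K := by
    have : (K - k) / (M - m) * (t - m) = s * (K - k) := by
      rw [hs]; ring
    rw [this]; ring
  have key : k + (K - k) / (M - m) * (t - m) ≤ C * t ^ q := by
    rw [hline]
    calc (1 - s) * k + s * K
        ≤ (1 - s) * (C * m ^ q) + s * (C * M ^ q) := by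
          apply add_le_add
          · exact mul_le_mul_of_nonneg_left hCk (by linarith)
          · exact mul_le_mul_of_nonneg_left hCK hs0
      _ = C * ((1 - s) * m ^ q + s * M ^ q) := by ring
      _ ≤ C * t ^ q := mul_le_mul_of_nonneg_left hconc hC0.le
  have htneg : (0:ℝ) < t ^ (-q) := Real.rpow_pos_of_pos ht0 _
  calc t ^ (-q) * (k + (K - k) / (M - m) * (t - m))
      ≤ t ^ (-q) * (C * t ^ q) := mul_le_mul_of_nonneg_left key htneg.le
    _ = C * (t ^ (-q) * t ^ q) := by ring
    _ = C := by rw [← Real.rpow_add ht0]; simp
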